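/- Let h : ℝ → ℝ be C¹, L_h-periodic, positive, with bounded derivative, and let α > β > 0, γ > 0. Let g : ℝ → ℝ be continuous and positive, and φ : (0,1)×(0,L_g)×ℝ → ℝ be continuous in the third variable and bounded. Fix (x, y₁) and set ϱ_ε = ε^α⌊x/ε^α⌋ L_g + ε^α y₁. Then (1/ε^γ) | ∫_{g(y₁) - ε^γ h(ϱ_ε/ε^β)}^{g(y₁)} φ(x,y₁,y₂) dy₂ − ∫_{g(y₁) - ε^γ h(x/ε^β)}^{g(y₁)} φ(x,y₁,y₂) dy₂ | ≤ sup|φ| · ‖h'‖_∞ · |ϱ_ε − x| / ε^β, and hence this quantity tends to 0 as ε → 0⁺. -/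

import Mathlib

open MeasureTheory Filter Topology

/-- The unfolding base point `ϱ_ε = ε^α [x/ε^α]_{L_g} L_g + ε^α y₁`. -/
noncomputable def rhoPt (Lg α x y₁ ε : ℝ) : ℝ :=
  ε ^ α * (⌊x / (ε ^ α * Lg)⌋ : ℝ) * Lg + ε ^ α * y₁

/-- Key reiterated-homogenization estimate: the difference of the two concentrated
integrals is bounded by `sup|φ| · ‖h'‖_∞ · |ϱ_ε - x| / ε^β`, and hence tends to `0`
as `ε → 0⁺` (since `α > β`). -/
theorem stmt19 (h g : ℝ → ℝ) (Lg Lh : ℝ) (hLg : 0 < Lg) (hLh : 0 < Lh)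
    (hhC1 : ContDiff ℝ 1 h) (hhper : ∀ t, h (t + Lh) = h t) (hhpos : ∀ t, 0 < h t)
    (Mh : ℝ) (hMh : ∀ t, |deriv h t| ≤ Mh)
    (α β γ : ℝ) (hβ : 0 < β) (hαβ : β < α) (hγ : 0 < γ)
    (hgc : Continuous g) (hgpos : ∀ t, 0 < g t)
    (φ : ℝ → ℝ → ℝ → ℝ) (Mφ : ℝ)
    (hφc : ∀ x y₁, Continuous (φ x y₁)) (hφb : ∀ x y₁ y₂, |φ x y₁ y₂| ≤ Mφ)
    (x y₁ : ℝ) (hx : x ∈ Set.Ioo (0:ℝ) 1) (hy₁ : y₁ ∈ Set.Ico 0 Lg) :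
    (∀ ε : ℝ, 0 < ε →
      (1 / ε ^ γ) *
        |(∫ y₂ in (g y₁ - ε ^ γ * h (rhoPt Lg α x y₁ ε / ε ^ β))..(g y₁), φ x y₁ y₂) -
          ∫ y₂ in (g y₁ - ε ^ γ * h (x / ε ^ β))..(g y₁), φ x y₁ y₂|
        ≤ Mφ * Mh * |rhoPt Lg α x y₁ ε - x| / ε ^ β) ∧
    Tendsto (fun ε : ℝ =>
        (1 / ε ^ γ) *
          |(∫ y₂ in (g y₁ - ε ^ γ * h (rhoPt Lg α x y₁ ε / ε ^ β))..(g y₁), φ x y₁ y₂) -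
            ∫ y₂ in (g y₁ - ε ^ γ * h (x / ε ^ β))..(g y₁), φ x y₁ y₂|)
      (𝓝[>] 0) (𝓝 0) := by
  have hMh0 : 0 ≤ Mh := (abs_nonneg _).trans (hMh 0)
  have hMφ0 : 0 ≤ Mφ := (abs_nonneg _).trans (hφb x y₁ 0)
  -- Lipschitz estimate for h
  have hlip : ∀ u v : ℝ, |h u - h v| ≤ Mh * |u - v| := by
    intro u v
    have := Convex.norm_image_sub_le_of_norm_deriv_le
      (f := h) (C := Mh) (s := Set.univ)
      (fun t _ => (hhC1.differentiable one_ne_zero) t)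
      (fun t _ => hMh t) convex_univ (Set.mem_univ v) (Set.mem_univ u)
    simpa [Real.norm_eq_abs] using this
  -- distance bound for ρ_ε
  have hdist : ∀ ε : ℝ, 0 < ε → |rhoPt Lg α x y₁ ε - x| ≤ ε ^ α * Lg := by
    intro ε hε
    have hεα : (0:ℝ) < ε ^ α := Real.rpow_pos_of_pos hε α
    have hc : (0:ℝ) < ε ^ α * Lg := mul_pos hεα hLg
    set F : ℝ := (⌊x / (ε ^ α * Lg)⌋ : ℝ) with hF
    have hA : F * (ε ^ α * Lg) ≤ x := by
      have := Int.floor_le (x / (ε ^ α * Lg))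
      rw [← le_div_iff₀ hc]
      exact this
    have hB : x < (F + 1) * (ε ^ α * Lg) := by
      have := Int.lt_floor_add_one (x / (ε ^ α * Lg))
      rw [← div_lt_iff₀ hc]
      push_cast
      exact this
    have hy0 : 0 ≤ ε ^ α * y₁ := mul_nonneg hεα.le hy₁.1
    have hy2 : ε ^ α * y₁ < ε ^ α * Lg := by
      have := hy₁.2
      nlinarith
    rw [abs_le]
    unfold rhoPt
    constructor <;> nlinarith
  -- Part 1
  have key : ∀ ε : ℝ, 0 < ε →
      (1 / ε ^ γ) *
        |(∫ y₂ in (g y₁ - ε ^ γ * h (rhoPt Lg α x y₁ ε / ε ^ β))..(g y₁), φ x y₁ y₂) -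
          ∫ y₂ in (g y₁ - ε ^ γ * h (x / ε ^ β))..(g y₁), φ x y₁ y₂|
        ≤ Mφ * Mh * |rhoPt Lg α x y₁ ε - x| / ε ^ β := by
    intro ε hε
    have hεβ : (0:ℝ) < ε ^ β := Real.rpow_pos_of_pos hε β
    have hεγ : (0:ℝ) < ε ^ γ := Real.rpow_pos_of_pos hε γ
    set ρ := rhoPt Lg α x y₁ ε with hρ
    set a := g y₁ - ε ^ γ * h (ρ / ε ^ β) with ha
    set b := g y₁ - ε ^ γ * h (x / ε ^ β) with hb
    have hint : ∀ p q : ℝ, IntervalIntegrable (φ x y₁) volume p q :=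
      fun p q => (hφc x y₁).intervalIntegrable p q
    have hsplit : (∫ y₂ in a..(g y₁), φ x y₁ y₂) - (∫ y₂ in b..(g y₁), φ x y₁ y₂)
        = ∫ y₂ in a..b, φ x y₁ y₂ := by
      rw [← intervalIntegral.integral_add_adjacent_intervals (hint a b) (hint b (g y₁))]
      ring
    have hbound : |∫ y₂ in a..b, φ x y₁ y₂| ≤ Mφ * |b - a| := by
      have := intervalIntegral.norm_integral_le_of_norm_le_const
        (f := φ x y₁) (a := a) (b := b) (C := Mφ) (fun t _ => by
          simpa [Real.norm_eq_abs] using hφb x y₁ t)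
      simpa [Real.norm_eq_abs] using this
    have hba : |b - a| ≤ ε ^ γ * (Mh * |ρ - x| / ε ^ β) := by
      have h1 : b - a = ε ^ γ * (h (ρ / ε ^ β) - h (x / ε ^ β)) := by
        rw [ha, hb]; ring
      rw [h1, abs_mul, abs_of_pos hεγ]
      have h3 : |ρ / ε ^ β - x / ε ^ β| = |ρ - x| / ε ^ β := by
        rw [div_sub_div_same, abs_div, abs_of_pos hεβ]
      have h2 : |h (ρ / ε ^ β) - h (x / ε ^ β)| ≤ Mh * |ρ - x| / ε ^ β := by
        have := hlip (ρ / ε ^ β) (x / ε ^ β)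
        rw [h3] at this
        rw [mul_div_assoc]
        exact this
      exact mul_le_mul_of_nonneg_left h2 hεγ.le
    rw [hsplit]
    have h4 : |∫ y₂ in a..b, φ x y₁ y₂| ≤ Mφ * (ε ^ γ * (Mh * |ρ - x| / ε ^ β)) :=
      hbound.trans (mul_le_mul_of_nonneg_left hba hMφ0)
    have h5 : (1 / ε ^ γ) * |∫ y₂ in a..b, φ x y₁ y₂|
        ≤ (1 / ε ^ γ) * (Mφ * (ε ^ γ * (Mh * |ρ - x| / ε ^ β))) :=
      mul_le_mul_of_nonneg_left h4 (by positivity)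
    calc _ ≤ (1 / ε ^ γ) * (Mφ * (ε ^ γ * (Mh * |ρ - x| / ε ^ β))) := h5
      _ = Mφ * Mh * |ρ - x| / ε ^ β := by field_simp
  refine ⟨key, ?_⟩
  -- Part 2: squeeze
  have hpos : ∀ᶠ ε : ℝ in 𝓝[>] 0, 0 < ε := self_mem_nhdsWithin
  have hub : ∀ᶠ ε : ℝ in 𝓝[>] 0,
      (1 / ε ^ γ) *
        |(∫ y₂ in (g y₁ - ε ^ γ * h (rhoPt Lg α x y₁ ε / ε ^ β))..(g y₁), φ x y₁ y₂) -
          ∫ y₂ in (g y₁ - ε ^ γ * h (x / ε ^ β))..(g y₁), φ x y₁ y₂|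
        ≤ Mφ * Mh * Lg * ε ^ (α - β) := by
    filter_upwards [hpos] with ε hε
    have hεβ : (0:ℝ) < ε ^ β := Real.rpow_pos_of_pos hε β
    refine (key ε hε).trans ?_
    have h1 : Mφ * Mh * |rhoPt Lg α x y₁ ε - x| / ε ^ β
        ≤ Mφ * Mh * (ε ^ α * Lg) / ε ^ β := by
      have := hdist ε hε
      gcongr
    refine h1.trans_eq ?_
    rw [Real.rpow_sub hε]
    field_simp
  have hlb : ∀ᶠ ε : ℝ in 𝓝[>] 0, 0 ≤
      (1 / ε ^ γ) *
        |(∫ y₂ in (g y₁ - ε ^ γ * h (rhoPt Lg α x y₁ ε / ε ^ β))..(g y₁), φ x y₁ y₂) -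
          ∫ y₂ in (g y₁ - ε ^ γ * h (x / ε ^ β))..(g y₁), φ x y₁ y₂| := by
    filter_upwards [hpos] with ε hε
    have hεγ : (0:ℝ) < ε ^ γ := Real.rpow_pos_of_pos hε γ
    positivity
  have htg : Tendsto (fun ε : ℝ => Mφ * Mh * Lg * ε ^ (α - β)) (𝓝[>] 0) (𝓝 0) := by
    have hαβ' : (0:ℝ) < α - β := sub_pos.mpr hαβ
    have hc : ContinuousAt (fun ε : ℝ => ε ^ (α - β)) 0 :=
      Real.continuousAt_rpow_const 0 (α - β) (Or.inr hαβ'.le)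
    have h0 : (0:ℝ) ^ (α - β) = 0 := Real.zero_rpow hαβ'.ne'
    have : Tendsto (fun ε : ℝ => ε ^ (α - β)) (𝓝[>] 0) (𝓝 0) := by
      have := hc.tendsto.mono_left (nhdsWithin_le_nhds (s := Set.Ioi (0:ℝ)))
      rwa [h0] at this
    have := this.const_mul (Mφ * Mh * Lg)
    simpa using this
  exact squeeze_zero' hlb hub htg
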